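/- Let L be the generator of the SDE dS = [α - βSI - μS]dt + σ₁S dB, dI = [βSI - (μ+ρ+γ)I]dt + σ₂I dB, and let 0 < p < min{2μ/σ₁², 2(μ+ρ+γ)/σ₂²}. Define U(u,v) = (u+v)^{1+p} + u^{-p/2}. Then there exist constants K₁ > 0 and K₂ > 0 such that LU(u,v) ≤ K₂ - K₁U(u,v) for all u, v > 0. -/

import Mathlib

open Real

/-- The Lyapunov function `U(u,v) = (u+v)^{1+p} + u^{-p/2}`. -/
noncomputable def Ufun (p u v : ℝ) : ℝ := (u + v) ^ (1 + p) + u ^ (-(p / 2))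

lemma hasDerivAt_U_u (p v : ℝ) {x : ℝ} (hx : 0 < x) (hxv : 0 < x + v) :
    HasDerivAt (fun x => Ufun p x v)
      ((1 + p) * (x + v) ^ p + (-(p / 2)) * x ^ (-(p / 2) - 1)) x := by
  have h1 : HasDerivAt (fun x : ℝ => (x + v) ^ (1 + p))
      (1 * (1 + p) * (x + v) ^ (1 + p - 1)) x :=
    ((hasDerivAt_id x).add_const v).rpow_const (Or.inl hxv.ne')
  have h2 : HasDerivAt (fun x : ℝ => x ^ (-(p / 2)))
      ((-(p / 2)) * x ^ (-(p / 2) - 1)) x :=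
    Real.hasDerivAt_rpow_const (Or.inl hx.ne')
  have := h1.add h2
  simpa [Ufun, add_sub_cancel_left, Pi.add_def] using this

lemma hasDerivAt_U_v (p u : ℝ) {y : ℝ} (huy : 0 < u + y) :
    HasDerivAt (fun y => Ufun p u y) ((1 + p) * (u + y) ^ p) y := by
  have h1 : HasDerivAt (fun y : ℝ => (u + y) ^ (1 + p))
      (1 * (1 + p) * (u + y) ^ (1 + p - 1)) y :=
    ((hasDerivAt_id y).const_add u).rpow_const (Or.inl huy.ne')
  have := h1.add_const (u ^ (-(p / 2)))
  simpa [Ufun, add_sub_cancel_left] using this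

lemma rpow_absorb {a b : ℝ} (ha : 0 < a) (hab : a < b) {δ : ℝ} (hδ : 0 < δ) :
    ∃ C : ℝ, 0 < C ∧ ∀ x : ℝ, 0 < x → x ^ a ≤ δ * x ^ b + C := by
  set R : ℝ := δ ^ (-(1 / (b - a))) with hR
  have hRpos : 0 < R := Real.rpow_pos_of_pos hδ _
  refine ⟨max 1 (R ^ a), lt_max_of_lt_left one_pos, fun x hx => ?_⟩
  rcases le_or_gt x R with h | h
  · have h1 : x ^ a ≤ R ^ a := Real.rpow_le_rpow hx.le h ha.le
    have h2 : 0 < δ * x ^ b := mul_pos hδ (Real.rpow_pos_of_pos hx b)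
    have := le_max_right (1 : ℝ) (R ^ a)
    linarith
  · have hba : 0 < b - a := by linarith
    have h1 : x ^ (a - b) = (x⁻¹) ^ (b - a) := by
      rw [Real.inv_rpow hx.le, ← Real.rpow_neg hx.le]
      norm_num
    have h2 : (x⁻¹ : ℝ) ≤ R⁻¹ := by
      exact inv_anti₀ hRpos h.le
    have h3 : (x⁻¹) ^ (b - a) ≤ (R⁻¹) ^ (b - a) :=
      Real.rpow_le_rpow (by positivity) h2 hba.le
    have h4 : (R⁻¹ : ℝ) ^ (b - a) = δ := by
      rw [hR, ← Real.rpow_neg hδ.le, ← Real.rpow_mul hδ.le,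
        show -(-(1 / (b - a))) * (b - a) = 1 by field_simp, Real.rpow_one]
    have h5 : x ^ a = x ^ b * x ^ (a - b) := by
      rw [← Real.rpow_add hx]; ring_nf
    have h6 : x ^ b * x ^ (a - b) ≤ x ^ b * δ := by
      apply mul_le_mul_of_nonneg_left _ (Real.rpow_pos_of_pos hx b).le
      rw [h1]; rw [h4] at h3; exact h3
    have h7 : 0 < max 1 (R ^ a) := lt_max_of_lt_left one_pos
    calc x ^ a = x ^ b * x ^ (a - b) := h5
      _ ≤ x ^ b * δ := h6
      _ = δ * x ^ b := by ring
      _ ≤ δ * x ^ b + max 1 (R ^ a) := by linarith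

lemma young_split {p : ℝ} (hp : 0 < p) {δ : ℝ} (hδ : 0 < δ) :
    ∃ C : ℝ, 0 < C ∧ ∀ x y : ℝ, 0 ≤ x → 0 ≤ y →
      x * y ≤ δ * x ^ (1 + p) + C * y ^ ((1 + p) / p) := by
  have h1p : (0:ℝ) < 1 + p := by linarith
  have hconj : (1 + p).HolderConjugate ((1 + p) / p) := by
    rw [Real.holderConjugate_iff]
    constructor
    · linarith
    · field_simp
  set lam : ℝ := (δ * (1 + p)) ^ ((1 + p)⁻¹) with hlam
  have hlampos : 0 < lam := Real.rpow_pos_of_pos (by positivity) _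
  have hlampow : lam ^ (1 + p) = δ * (1 + p) := by
    rw [hlam, ← Real.rpow_mul (by positivity)]
    rw [inv_mul_cancel₀ h1p.ne', Real.rpow_one]
  refine ⟨(lam⁻¹) ^ ((1 + p) / p) * (p / (1 + p)), by positivity, fun x y hx hy => ?_⟩
  have key := Real.young_inequality_of_nonneg
    (mul_nonneg hlampos.le hx) (mul_nonneg (inv_nonneg.2 hlampos.le) hy) hconj
  have e1 : (lam * x) ^ (1 + p) = lam ^ (1 + p) * x ^ (1 + p) :=
    Real.mul_rpow hlampos.le hx
  have e2 : (lam⁻¹ * y) ^ ((1 + p) / p) = (lam⁻¹) ^ ((1 + p) / p) * y ^ ((1 + p) / p) :=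
    Real.mul_rpow (by positivity) hy
  have e3 : lam * x * (lam⁻¹ * y) = x * y := by
    field_simp
  rw [e3, e1, e2, hlampow] at key
  calc x * y ≤ δ * (1 + p) * x ^ (1 + p) / (1 + p)
        + (lam⁻¹) ^ ((1 + p) / p) * y ^ ((1 + p) / p) / ((1 + p) / p) := key
    _ = δ * x ^ (1 + p)
        + ((lam⁻¹) ^ ((1 + p) / p) * (p / (1 + p))) * y ^ ((1 + p) / p) := by
      field_simp

/-- The generator of the degenerate SIR diffusion applied to `U`. -/
noncomputable def LU (α β μ ρ γ σ₁ σ₂ p u v : ℝ) : ℝ :=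
  (α - β * u * v - μ * u) * deriv (fun x => Ufun p x v) u
    + (β * u * v - (μ + ρ + γ) * v) * deriv (fun y => Ufun p u y) v
    + (1 / 2) * (σ₁ * u) ^ 2 * deriv (fun x => deriv (fun x' => Ufun p x' v) x) u
    + σ₁ * σ₂ * u * v * deriv (fun x => deriv (fun y => Ufun p x y) v) u
    + (1 / 2) * (σ₂ * v) ^ 2 * deriv (fun y => deriv (fun y' => Ufun p u y') y) v

/-- Lyapunov drift condition: for `0 < p < min{2μ/σ₁², 2(μ+ρ+γ)/σ₂²}` there exist
`K₁, K₂ > 0` with `LU(u,v) ≤ K₂ - K₁ U(u,v)` for all `u, v > 0`. -/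
lemma deriv2_U_u (p : ℝ) {u v : ℝ} (hu : 0 < u) (hv : 0 < v) :
    deriv (fun x => deriv (fun x' => Ufun p x' v) x) u
      = (1 + p) * p * (u + v) ^ (p - 1) + (p / 2) * ((p / 2) + 1) * u ^ (-(p / 2) - 2) := by
  have hev : (fun x => deriv (fun x' => Ufun p x' v) x) =ᶠ[nhds u]
      (fun x => (1 + p) * (x + v) ^ p + (-(p / 2)) * x ^ (-(p / 2) - 1)) := by
    filter_upwards [Ioi_mem_nhds hu] with x hx
    exact (hasDerivAt_U_u p v hx (add_pos hx hv)).deriv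
  rw [hev.deriv_eq]
  have h1 : HasDerivAt (fun x : ℝ => (x + v) ^ p) (1 * p * (u + v) ^ (p - 1)) u :=
    ((hasDerivAt_id u).add_const v).rpow_const (Or.inl (add_pos hu hv).ne')
  have h2 : HasDerivAt (fun x : ℝ => x ^ (-(p / 2) - 1))
      ((-(p / 2) - 1) * u ^ (-(p / 2) - 1 - 1)) u :=
    Real.hasDerivAt_rpow_const (Or.inl hu.ne')
  rw [HasDerivAt.deriv (f := fun x => (1 + p) * (x + v) ^ p + -(p / 2) * x ^ (-(p / 2) - 1))
    ((h1.const_mul (1 + p)).add (h2.const_mul (-(p / 2))))]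
  rw [show (-(p / 2) - 1 - 1 : ℝ) = -(p / 2) - 2 by ring]
  ring

lemma deriv2_U_v (p : ℝ) {u v : ℝ} (hu : 0 < u) (hv : 0 < v) :
    deriv (fun y => deriv (fun y' => Ufun p u y') y) v
      = (1 + p) * p * (u + v) ^ (p - 1) := by
  have hev : (fun y => deriv (fun y' => Ufun p u y') y) =ᶠ[nhds v]
      (fun y => (1 + p) * (u + y) ^ p) := by
    filter_upwards [Ioi_mem_nhds hv] with y hy
    exact (hasDerivAt_U_v p u (add_pos hu hy)).deriv
  rw [hev.deriv_eq]
  have h1 : HasDerivAt (fun y : ℝ => (u + y) ^ p) (1 * p * (u + v) ^ (p - 1)) v :=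
    ((hasDerivAt_id v).const_add u).rpow_const (Or.inl (add_pos hu hv).ne')
  rw [(h1.const_mul (1 + p)).deriv]
  ring

lemma deriv2_U_uv (p : ℝ) {u v : ℝ} (hu : 0 < u) (hv : 0 < v) :
    deriv (fun x => deriv (fun y => Ufun p x y) v) u
      = (1 + p) * p * (u + v) ^ (p - 1) := by
  have hev : (fun x => deriv (fun y => Ufun p x y) v) =ᶠ[nhds u]
      (fun x => (1 + p) * (x + v) ^ p) := by
    filter_upwards [Ioi_mem_nhds hu] with x hx
    exact (hasDerivAt_U_v p x (add_pos hx hv)).deriv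
  rw [hev.deriv_eq]
  have h1 : HasDerivAt (fun x : ℝ => (x + v) ^ p) (1 * p * (u + v) ^ (p - 1)) u :=
    ((hasDerivAt_id u).add_const v).rpow_const (Or.inl (add_pos hu hv).ne')
  rw [(h1.const_mul (1 + p)).deriv]
  ring

lemma LU_eq (α β μ ρ γ σ₁ σ₂ p : ℝ) {u v : ℝ} (hu : 0 < u) (hv : 0 < v) :
    LU α β μ ρ γ σ₁ σ₂ p u v =
      (α - β * u * v - μ * u) * ((1 + p) * (u + v) ^ p + (-(p / 2)) * u ^ (-(p / 2) - 1))
      + (β * u * v - (μ + ρ + γ) * v) * ((1 + p) * (u + v) ^ p)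
      + (1 / 2) * (σ₁ * u) ^ 2 *
          ((1 + p) * p * (u + v) ^ (p - 1) + (p / 2) * ((p / 2) + 1) * u ^ (-(p / 2) - 2))
      + σ₁ * σ₂ * u * v * ((1 + p) * p * (u + v) ^ (p - 1))
      + (1 / 2) * (σ₂ * v) ^ 2 * ((1 + p) * p * (u + v) ^ (p - 1)) := by
  rw [LU, (hasDerivAt_U_u p v hu (add_pos hu hv)).deriv,
    (hasDerivAt_U_v p u (add_pos hu hv)).deriv,
    deriv2_U_u p hu hv, deriv2_U_v p hu hv, deriv2_U_uv p hu hv]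

set_option maxHeartbeats 2000000 in
theorem generator_lyapunov_bound (α β μ ρ γ σ₁ σ₂ p : ℝ)
    (hα : 0 < α) (hβ : 0 < β) (hμ : 0 < μ) (hρ : 0 < ρ) (hγ : 0 < γ)
    (hσ₁ : σ₁ ≠ 0) (hσ₂ : σ₂ ≠ 0)
    (hp : 0 < p) (hp₁ : p < 2 * μ / σ₁ ^ 2) (hp₂ : p < 2 * (μ + ρ + γ) / σ₂ ^ 2) :
    ∃ K₁ : ℝ, 0 < K₁ ∧ ∃ K₂ : ℝ, 0 < K₂ ∧
      ∀ u v : ℝ, 0 < u → 0 < v →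
        LU α β μ ρ γ σ₁ σ₂ p u v ≤ K₂ - K₁ * Ufun p u v := by
  have hσ1sq : (0:ℝ) < σ₁ ^ 2 := by positivity
  have hσ2sq : (0:ℝ) < σ₂ ^ 2 := by positivity
  rw [lt_div_iff₀ hσ1sq] at hp₁
  rw [lt_div_iff₀ hσ2sq] at hp₂
  have hm₁ : (0:ℝ) < μ - p * σ₁ ^ 2 / 2 := by linarith
  have hm₂ : (0:ℝ) < μ + ρ + γ - p * σ₂ ^ 2 / 2 := by linarith
  set m : ℝ := min (μ - p * σ₁ ^ 2 / 2) (μ + ρ + γ - p * σ₂ ^ 2 / 2) with hmdef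
  have hm : 0 < m := lt_min hm₁ hm₂
  have hmle₁ : m ≤ μ - p * σ₁ ^ 2 / 2 := min_le_left _ _
  have hmle₂ : m ≤ μ + ρ + γ - p * σ₂ ^ 2 / 2 := min_le_right _ _
  have h1p : (0:ℝ) < 1 + p := by linarith
  set K₁ : ℝ := min ((1 + p) * m / 8) 1 with hK₁def
  have hK₁ : 0 < K₁ := lt_min (by positivity) one_pos
  have hK1m : K₁ ≤ (1 + p) * m / 8 := min_le_left _ _
  set B : ℝ := (p / 2) * (μ + ((p / 2) + 1) * (σ₁ ^ 2 / 2)) + K₁ with hBdef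
  have hB : 0 < B := by positivity
  -- the four absorption/Young constants
  obtain ⟨Ca, hCa, ha⟩ := rpow_absorb hp (show p < 1 + p by linarith)
    (show (0:ℝ) < m / (2 * α) by positivity)
  obtain ⟨Cb, hCb, hb⟩ := young_split hp
    (show (0:ℝ) < (1 + p) * m / (4 * (p * β)) by positivity)
  obtain ⟨Cc, hCc, hc⟩ := rpow_absorb (show (0:ℝ) < (1 + p) / 2 by linarith)
    (show (1 + p) / 2 < 1 + p / 2 by linarith)
    (show (0:ℝ) < α / (2 * (β * Cb)) by positivity)
  obtain ⟨Cd, hCd, hd⟩ := rpow_absorb (show (0:ℝ) < p / 2 by linarith)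
    (show p / 2 < 1 + p / 2 by linarith)
    (show (0:ℝ) < p * α / (4 * B) by positivity)
  refine ⟨K₁, hK₁, (1 + p) * α * Ca + (p / 2) * β * Cb * Cc + B * Cd + 1, by positivity,
    fun u v hu hv => ?_⟩
  have hs : 0 < u + v := by linarith
  -- power rewriting identities
  have hP1 : (u + v) ^ p = (u + v) ^ (p - 1) * (u + v) := by
    have h := Real.rpow_add_one hs.ne' (p - 1)
    rwa [show p - 1 + 1 = p by ring] at h
  have hP2 : (u + v) ^ (1 + p) = (u + v) ^ p * (u + v) := by
    have h := Real.rpow_add_one hs.ne' p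
    rwa [show p + 1 = 1 + p by ring] at h
  have hWa : u ^ (-(p / 2)) = u ^ (-(p / 2) - 1) * u := by
    have h := Real.rpow_add_one hu.ne' (-(p / 2) - 1)
    rwa [show -(p / 2) - 1 + 1 = -(p / 2) by ring] at h
  have hWb : u ^ (-(p / 2) - 1) = u ^ (-(p / 2) - 2) * u := by
    have h := Real.rpow_add_one hu.ne' (-(p / 2) - 2)
    rwa [show -(p / 2) - 2 + 1 = -(p / 2) - 1 by ring] at h
  have hT2 : 0 < (u + v) ^ (1 + p) := Real.rpow_pos_of_pos hs _
  have hW : 0 < u ^ (-(p / 2)) := Real.rpow_pos_of_pos hu _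
  -- grouped formula for LU
  have hLU : LU α β μ ρ γ σ₁ σ₂ p u v =
      (1 + p) * (u + v) ^ (p - 1) *
        (α * (u + v) - (μ - p * σ₁ ^ 2 / 2) * u ^ 2
          - (μ + ρ + γ - p * σ₂ ^ 2 / 2) * v ^ 2
          - (2 * μ + ρ + γ - p * σ₁ * σ₂) * (u * v))
      + (p / 2) * (β * v + (μ + ((p / 2) + 1) * (σ₁ ^ 2 / 2))) * u ^ (-(p / 2))
      - (p / 2) * α * u ^ (-(p / 2) - 1) := by
    rw [LU_eq α β μ ρ γ σ₁ σ₂ p hu hv, hP1, hWa, hWb]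
    ring
  -- quadratic bracket bound
  have hbr : α * (u + v) - (μ - p * σ₁ ^ 2 / 2) * u ^ 2
      - (μ + ρ + γ - p * σ₂ ^ 2 / 2) * v ^ 2
      - (2 * μ + ρ + γ - p * σ₁ * σ₂) * (u * v)
      ≤ α * (u + v) - m * (u + v) ^ 2 := by
    have h3 : 2 * m ≤ 2 * μ + ρ + γ - p * σ₁ * σ₂ := by
      linarith [mul_nonneg hp.le (sq_nonneg (σ₁ - σ₂))]
    linarith [mul_nonneg (sub_nonneg.2 hmle₁) (sq_nonneg u),
      mul_nonneg (sub_nonneg.2 hmle₂) (sq_nonneg v),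
      mul_nonneg (by linarith : (0:ℝ) ≤ 2 * μ + ρ + γ - p * σ₁ * σ₂ - 2 * m)
        (mul_pos hu hv).le]
  have main1 : LU α β μ ρ γ σ₁ σ₂ p u v ≤
      (1 + p) * α * (u + v) ^ p - (1 + p) * m * (u + v) ^ (1 + p)
      + (p / 2) * β * (v * u ^ (-(p / 2)))
      + (p / 2) * (μ + ((p / 2) + 1) * (σ₁ ^ 2 / 2)) * u ^ (-(p / 2))
      - (p / 2) * α * u ^ (-(p / 2) - 1) := by
    have h1 := mul_le_mul_of_nonneg_left hbr
      (show (0:ℝ) ≤ (1 + p) * (u + v) ^ (p - 1) by positivity)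
    have h2 : (1 + p) * (u + v) ^ (p - 1) * (α * (u + v) - m * (u + v) ^ 2)
        = (1 + p) * α * (u + v) ^ p - (1 + p) * m * (u + v) ^ (1 + p) := by
      rw [hP2, hP1]; ring
    rw [hLU]
    linarith [h1, h2.le, h2.ge]
  -- scaled absorption inequalities
  have hA : (1 + p) * α * (u + v) ^ p
      ≤ (1 + p) * m / 2 * (u + v) ^ (1 + p) + (1 + p) * α * Ca := by
    calc (1 + p) * α * (u + v) ^ p
        ≤ (1 + p) * α * (m / (2 * α) * (u + v) ^ (1 + p) + Ca) :=
          mul_le_mul_of_nonneg_left (ha (u + v) hs) (by positivity)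
      _ = (1 + p) * m / 2 * (u + v) ^ (1 + p) + (1 + p) * α * Ca := by
          field_simp
  have hWY : (u ^ (-(p / 2))) ^ ((1 + p) / p) = u ^ (-((1 + p) / 2)) := by
    rw [← Real.rpow_mul hu.le]
    congr 1
    field_simp
  have hvP : v ^ (1 + p) ≤ (u + v) ^ (1 + p) :=
    Real.rpow_le_rpow hv.le (by linarith) (by linarith)
  have hBb : (p / 2) * β * (v * u ^ (-(p / 2)))
      ≤ (1 + p) * m / 8 * (u + v) ^ (1 + p)
        + (p / 2) * β * Cb * u ^ (-((1 + p) / 2)) := by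
    have hb' := hb v (u ^ (-(p / 2))) hv.le hW.le
    rw [hWY] at hb'
    have h1 : v * u ^ (-(p / 2)) ≤ (1 + p) * m / (4 * (p * β)) * (u + v) ^ (1 + p)
        + Cb * u ^ (-((1 + p) / 2)) := by
      have h2 := mul_le_mul_of_nonneg_left hvP
        (show (0:ℝ) ≤ (1 + p) * m / (4 * (p * β)) by positivity)
      linarith
    calc (p / 2) * β * (v * u ^ (-(p / 2)))
        ≤ (p / 2) * β * ((1 + p) * m / (4 * (p * β)) * (u + v) ^ (1 + p)
            + Cb * u ^ (-((1 + p) / 2))) :=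
          mul_le_mul_of_nonneg_left h1 (by positivity)
      _ = (1 + p) * m / 8 * (u + v) ^ (1 + p)
            + (p / 2) * β * Cb * u ^ (-((1 + p) / 2)) := by
          field_simp; ring
  have e1 : (u⁻¹) ^ ((1 + p) / 2) = u ^ (-((1 + p) / 2)) := by
    rw [Real.inv_rpow hu.le, ← Real.rpow_neg hu.le]
  have e2 : (u⁻¹) ^ (1 + p / 2) = u ^ (-(p / 2) - 1) := by
    rw [Real.inv_rpow hu.le, ← Real.rpow_neg hu.le]
    congr 1; ring
  have e3 : (u⁻¹) ^ (p / 2) = u ^ (-(p / 2)) := by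
    rw [Real.inv_rpow hu.le, ← Real.rpow_neg hu.le]
  have hC : (p / 2) * β * Cb * u ^ (-((1 + p) / 2))
      ≤ p * α / 4 * u ^ (-(p / 2) - 1) + (p / 2) * β * Cb * Cc := by
    have hc' := hc u⁻¹ (inv_pos.2 hu)
    rw [e1, e2] at hc'
    calc (p / 2) * β * Cb * u ^ (-((1 + p) / 2))
        ≤ (p / 2) * β * Cb * (α / (2 * (β * Cb)) * u ^ (-(p / 2) - 1) + Cc) :=
          mul_le_mul_of_nonneg_left hc' (by positivity)
      _ = p * α / 4 * u ^ (-(p / 2) - 1) + (p / 2) * β * Cb * Cc := by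
          field_simp; ring
  have hD : B * u ^ (-(p / 2))
      ≤ p * α / 4 * u ^ (-(p / 2) - 1) + B * Cd := by
    have hd' := hd u⁻¹ (inv_pos.2 hu)
    rw [e3, e2] at hd'
    calc B * u ^ (-(p / 2))
        ≤ B * (p * α / (4 * B) * u ^ (-(p / 2) - 1) + Cd) :=
          mul_le_mul_of_nonneg_left hd' hB.le
      _ = p * α / 4 * u ^ (-(p / 2) - 1) + B * Cd := by
          field_simp [hB.ne']
  have hpm : 0 < (1 + p) * m := mul_pos h1p hm
  have habs : K₁ * (u + v) ^ (1 + p) ≤ 3 / 8 * ((1 + p) * m) * (u + v) ^ (1 + p) :=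
    mul_le_mul_of_nonneg_right (by linarith) hT2.le
  have hBW : B * u ^ (-(p / 2)) =
      (p / 2) * (μ + ((p / 2) + 1) * (σ₁ ^ 2 / 2)) * u ^ (-(p / 2))
        + K₁ * u ^ (-(p / 2)) := by
    rw [hBdef]; ring
  rw [Ufun]
  linarith [main1, hA, hBb, hC, hD, habs, hBW.le, hBW.ge]
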